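/- In the Bernoulli model setup with θ ≠ 0, if ε/τ ≥ ‖θ‖_∞, then the sequence s_n = 2Wτ Σ_{j : θ(j) > 0} θ(j) φ(τ√n/√(1 − τ²); ε/(θ(j)τ)) is strictly increasing for all n ≥ 1. -/

import Mathlib

open Real Finset MeasureTheory ProbabilityTheory

/-- The CDF of the standard normal distribution. -/
noncomputable def stdNormalCDF (x : ℝ) : ℝ := cdf (gaussianReal 0 1) x

/-- `phi δ x = 2Φ(x) − Φ(x(1+δ)) − Φ(x(1−δ))`. -/
noncomputable def phi (δ x : ℝ) : ℝ :=
  2 * stdNormalCDF x - stdNormalCDF (x * (1 + δ)) - stdNormalCDF (x * (1 - δ))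

/-- The strip center `s_n = 2Wτ Σ_{j : θ(j) > 0} θ(j) φ(τ√n/√(1−τ²); ε/(θ(j)τ))`. -/
noncomputable def berStrip (d : ℕ) (W ε : ℝ) (θ : Fin d → ℝ) (τ : ℝ) (n : ℕ) : ℝ :=
  2 * W * τ * ∑ j ∈ Finset.univ.filter (fun j => 0 < θ j),
    θ j * phi (ε / (θ j * τ)) (τ * Real.sqrt n / Real.sqrt (1 - τ ^ 2))

/-- The standard normal density. -/
noncomputable def stdPDF (t : ℝ) : ℝ := (Real.sqrt (2 * π))⁻¹ * Real.exp (-(t ^ 2) / 2)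

lemma gaussianPDFReal_zero_one : gaussianPDFReal 0 1 = stdPDF := by
  funext t
  simp [gaussianPDFReal, stdPDF]

lemma continuous_stdPDF : Continuous stdPDF := by
  unfold stdPDF; fun_prop

lemma integrable_stdPDF : Integrable stdPDF := by
  rw [← gaussianPDFReal_zero_one]
  exact integrable_gaussianPDFReal 0 1

lemma stdNormalCDF_eq (x : ℝ) : stdNormalCDF x = ∫ t in Set.Iic x, stdPDF t := by
  rw [stdNormalCDF, cdf_eq_real, measureReal_def, gaussianReal_apply_eq_integral 0 one_ne_zero,
    ENNReal.toReal_ofReal, gaussianPDFReal_zero_one]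
  exact integral_nonneg fun t => gaussianPDFReal_nonneg _ _ _

lemma hasDerivAt_stdNormalCDF (x : ℝ) : HasDerivAt stdNormalCDF (stdPDF x) x := by
  have hfun : stdNormalCDF = fun y =>
      (∫ t in Set.Iic (0 : ℝ), stdPDF t) + ∫ t in (0 : ℝ)..y, stdPDF t := by
    funext y
    rw [stdNormalCDF_eq, ← intervalIntegral.integral_Iic_sub_Iic
      integrable_stdPDF.integrableOn integrable_stdPDF.integrableOn]
    ring
  rw [hfun]
  simpa [Pi.add_def] using (hasDerivAt_const x (∫ t in Set.Iic (0 : ℝ), stdPDF t)).add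
    (intervalIntegral.integral_hasDerivAt_right
      integrable_stdPDF.intervalIntegrable
      continuous_stdPDF.stronglyMeasurable.stronglyMeasurableAtFilter
      continuous_stdPDF.continuousAt)

lemma hasDerivAt_phi (δ x : ℝ) :
    HasDerivAt (phi δ)
      (2 * stdPDF x - stdPDF (x * (1 + δ)) * (1 + δ)
        - stdPDF (x * (1 - δ)) * (1 - δ)) x := by
  have h1 := (hasDerivAt_stdNormalCDF x).const_mul 2
  have h2 := (hasDerivAt_stdNormalCDF (x * (1 + δ))).comp x (hasDerivAt_mul_const (1 + δ))
  have h3 := (hasDerivAt_stdNormalCDF (x * (1 - δ))).comp x (hasDerivAt_mul_const (1 - δ))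
  exact (h1.sub h2).sub h3

lemma phi_deriv_pos {δ x : ℝ} (hδ : 1 ≤ δ) (hx : 0 < x) :
    0 < 2 * stdPDF x - stdPDF (x * (1 + δ)) * (1 + δ)
        - stdPDF (x * (1 - δ)) * (1 - δ) := by
  have hc : (0 : ℝ) < (Real.sqrt (2 * π))⁻¹ := by
    rw [inv_pos]
    exact Real.sqrt_pos.mpr (by positivity)
  unfold stdPDF
  set E1 := Real.exp (-(x ^ 2) / 2) with hE1
  set E2 := Real.exp (-((x * (1 + δ)) ^ 2) / 2) with hE2
  set E3 := Real.exp (-((x * (1 - δ)) ^ 2) / 2) with hE3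
  have h21 : E2 < E1 := by
    apply Real.exp_lt_exp.mpr
    nlinarith [sq_nonneg x, mul_pos hx hx]
  have h23 : E2 ≤ E3 := by
    apply Real.exp_le_exp.mpr
    nlinarith [sq_nonneg x]
  have hE2pos : 0 < E2 := Real.exp_pos _
  nlinarith [mul_le_mul_of_nonneg_left h23 (sub_nonneg.mpr hδ),
    mul_pos hc (sub_pos.mpr h21)]

lemma phi_strictMonoOn {δ : ℝ} (hδ : 1 ≤ δ) : StrictMonoOn (phi δ) (Set.Ici 0) := by
  apply strictMonoOn_of_deriv_pos (convex_Ici 0)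
  · exact Continuous.continuousOn (continuous_iff_continuousAt.mpr
      fun x => (hasDerivAt_phi δ x).differentiableAt.continuousAt)
  · intro x hx
    rw [interior_Ici] at hx
    rw [(hasDerivAt_phi δ x).deriv]
    exact phi_deriv_pos hδ hx

/-- In the strong adversary regime `ε/τ ≥ ‖θ‖_∞` (i.e. `θ(j) ≤ ε/τ` for all `j`, as
`θ ≥ 0`), the strip center `s_n` is strictly increasing for all `n ≥ 1`. -/
theorem berStrip_strong_adversary (d : ℕ) (W ε : ℝ) (θ : Fin d → ℝ) (τ : ℝ)
    (hW : 0 < W) (hε : 0 < ε) (hθ : ∀ j, 0 ≤ θ j) (hτ : τ ∈ Set.Ioo (0 : ℝ) 1)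
    (hθne : θ ≠ 0) (hstrong : ∀ j, θ j ≤ ε / τ) :
    ∀ m n : ℕ, 1 ≤ m → m < n →
      berStrip d W ε θ τ m < berStrip d W ε θ τ n := by
  obtain ⟨hτ0, hτ1⟩ := hτ
  intro m n hm hmn
  have hden : (0 : ℝ) < Real.sqrt (1 - τ ^ 2) :=
    Real.sqrt_pos.mpr (by nlinarith)
  set xm : ℝ := τ * Real.sqrt m / Real.sqrt (1 - τ ^ 2) with hxm
  set xn : ℝ := τ * Real.sqrt n / Real.sqrt (1 - τ ^ 2) with hxn
  have hxm0 : 0 < xm := by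
    apply div_pos (mul_pos hτ0 _) hden
    exact Real.sqrt_pos.mpr (by exact_mod_cast hm)
  have hlt : xm < xn := by
    apply (div_lt_div_iff_of_pos_right hden).mpr
    exact mul_lt_mul_of_pos_left
      (Real.sqrt_lt_sqrt (Nat.cast_nonneg m) (by exact_mod_cast hmn)) hτ0
  have hδ : ∀ j, 0 < θ j → 1 ≤ ε / (θ j * τ) := by
    intro j hj
    rw [one_le_div (mul_pos hj hτ0)]
    calc θ j * τ ≤ (ε / τ) * τ := mul_le_mul_of_nonneg_right (hstrong j) hτ0.le
    _ = ε := div_mul_cancel₀ ε hτ0.ne'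
  have hne : (Finset.univ.filter (fun j => 0 < θ j)).Nonempty := by
    obtain ⟨j, hj⟩ := Function.ne_iff.mp hθne
    exact ⟨j, Finset.mem_filter.mpr ⟨Finset.mem_univ j,
      lt_of_le_of_ne (hθ j) (Ne.symm hj)⟩⟩
  unfold berStrip
  rw [← hxm, ← hxn]
  apply mul_lt_mul_of_pos_left _ (by positivity)
  apply Finset.sum_lt_sum
  · intro j hj
    have hjpos := (Finset.mem_filter.mp hj).2
    exact mul_le_mul_of_nonneg_left
      ((phi_strictMonoOn (hδ j hjpos) (Set.mem_Ici.mpr hxm0.le)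
        (Set.mem_Ici.mpr (hxm0.trans hlt).le) hlt).le) (hθ j)
  · obtain ⟨j, hj⟩ := hne
    exact ⟨j, hj, mul_lt_mul_of_pos_left
      (phi_strictMonoOn (hδ j (Finset.mem_filter.mp hj).2) (Set.mem_Ici.mpr hxm0.le)
        (Set.mem_Ici.mpr (hxm0.trans hlt).le) hlt)
      (Finset.mem_filter.mp hj).2⟩
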